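/- Let X be a surface with χ(O_X) = 1 and q(X) = h¹(O_X) = 3, and let P be a line bundle in Pic⁰(X) with h⁰(−P) = 0 and h¹(−P) > 0. Suppose the cup product map H¹(−P) ⊗ H¹(O_X) → H²(−P) is nonzero on all nonzero simple tensors. Then we get a contradiction; i.e., no such P exists. -/

import Mathlib

open Polynomial Matrix Finset
set_option linter.unusedSectionVars false

namespace NoIso

variable {R : Type*} [CommRing R]

/-- Square matrix obtained from an `m × (m+1)` matrix by appending the row `w`. -/
def aug {m : ℕ} (M : Matrix (Fin m) (Fin (m+1)) R) (w : Fin (m+1) → R) :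
    Matrix (Fin (m+1)) (Fin (m+1)) R :=
  fun i => Fin.lastCases w (fun r => M r) i

@[simp] lemma aug_castSucc {m : ℕ} (M : Matrix (Fin m) (Fin (m+1)) R) (w) (r : Fin m) :
    aug M w r.castSucc = M r :=
  Fin.lastCases_castSucc ..

@[simp] lemma aug_last {m : ℕ} (M : Matrix (Fin m) (Fin (m+1)) R) (w) :
    aug M w (Fin.last m) = w :=
  Fin.lastCases_last ..

lemma vecMul_aug {m : ℕ} (M : Matrix (Fin m) (Fin (m+1)) R) (w) (u : Fin (m+1) → R) :
    vecMul u (aug M w) = vecMul (fun r => u r.castSucc) M + u (Fin.last m) • w := by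
  funext c
  simp only [vecMul, dotProduct, Pi.add_apply, Pi.smul_apply, smul_eq_mul]
  rw [Fin.sum_univ_castSucc]
  simp

lemma aug_map {m : ℕ} {S : Type*} [CommRing S] (f : R →+* S)
    (M : Matrix (Fin m) (Fin (m+1)) R) (w) :
    (aug M w).map f = aug (Matrix.of fun r c => f (M r c)) (fun c => f (w c)) := by
  ext i j
  refine Fin.lastCases ?_ (fun r => ?_) i <;> simp [Matrix.map_apply]

lemma det_eq_zero_iff_vecMul {K : Type*} [CommRing K] [IsDomain K] {n : ℕ}
    (S : Matrix (Fin n) (Fin n) K) :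
    S.det = 0 ↔ ∃ u, u ≠ 0 ∧ vecMul u S = 0 := by
  rw [← Matrix.det_transpose S, ← Matrix.exists_mulVec_eq_zero_iff]
  constructor <;> rintro ⟨u, h1, h2⟩ <;> refine ⟨u, h1, ?_⟩
  · rwa [Matrix.mulVec_transpose] at h2
  · rwa [Matrix.mulVec_transpose]

lemma det_aug_eq_zero_of_mem {K : Type*} [CommRing K] [IsDomain K] {m : ℕ}
    (M : Matrix (Fin m) (Fin (m+1)) K) (x : Fin m → K) :
    det (aug M (vecMul x M)) = 0 := by
  refine (det_eq_zero_iff_vecMul _).2 ⟨Fin.snoc x (-1), ?_, ?_⟩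
  · intro h
    have := congrFun h (Fin.last m)
    simp [Fin.snoc_last] at this
  · rw [vecMul_aug]
    have h1 : (fun r : Fin m => (Fin.snoc x (-1) : Fin (m+1) → K) r.castSucc) = x := by
      funext r; simp
    rw [h1]
    simp [Fin.snoc_last]

lemma exists_vecMul_of_det_aug {K : Type*} [Field K] {m : ℕ}
    (M : Matrix (Fin m) (Fin (m+1)) K) (w : Fin (m+1) → K)
    (hrows : ∀ x, x ≠ 0 → vecMul x M ≠ 0) (hdet : det (aug M w) = 0) :
    ∃ x, vecMul x M = w := by
  obtain ⟨u, hu, hker⟩ := (det_eq_zero_iff_vecMul _).1 hdet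
  rw [vecMul_aug] at hker
  by_cases hl : u (Fin.last m) = 0
  · exfalso
    have hfront : (fun r : Fin m => u r.castSucc) ≠ 0 := by
      intro h
      apply hu
      funext i
      refine Fin.lastCases ?_ (fun r => ?_) i
      · exact hl
      · exact congrFun h r
    apply hrows _ hfront
    rw [hl] at hker
    simpa using hker
  · refine ⟨(-(u (Fin.last m))⁻¹) • fun r => u r.castSucc, ?_⟩
    rw [Matrix.smul_vecMul]
    have h2 : vecMul (fun r => u r.castSucc) M = - (u (Fin.last m) • w) :=
      eq_neg_of_add_eq_zero_left hker
    rw [h2]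
    funext c
    simp only [Pi.smul_apply, Pi.neg_apply, smul_eq_mul]
    field_simp


/-- Cofactor of the last row. -/
def cof {m : ℕ} (M : Matrix (Fin m) (Fin (m+1)) R) (j : Fin (m+1)) : R :=
  (-1: R) ^ ((m : ℕ) + (j : ℕ)) *
    (Matrix.of fun (r : Fin m) (c : Fin m) => M r (j.succAbove c)).det

lemma det_aug (m : ℕ) (M : Matrix (Fin m) (Fin (m+1)) R) (w : Fin (m+1) → R) :
    det (aug M w) = ∑ j, w j * cof M j := by
  rw [Matrix.det_succ_row (aug M w) (Fin.last m)]
  refine Finset.sum_congr rfl fun j _ => ?_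
  have h1 : aug M w (Fin.last m) j = w j := by rw [aug_last]
  have h2 : ((aug M w).submatrix (Fin.last m).succAbove j.succAbove) =
      Matrix.of fun (r : Fin m) (c : Fin m) => M r (j.succAbove c) := by
    ext r c
    simp [Matrix.submatrix_apply, Fin.succAbove_last]
  rw [h1, h2]
  simp [cof]
  ring

lemma det_aug_single (m : ℕ) (M : Matrix (Fin m) (Fin (m+1)) R) (i : Fin (m+1)) :
    det (aug M (Pi.single i 1)) = cof M i := by
  rw [det_aug]
  rw [Finset.sum_eq_single i]
  · simp
  · intro b _ hb; simp [Pi.single_eq_of_ne hb]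
  · intro h; exact absurd (Finset.mem_univ i) h

/-- multilinearity of the determinant in the appended row -/
lemma det_aug_eq_sum (m : ℕ) (M : Matrix (Fin m) (Fin (m+1)) R) (w : Fin (m+1) → R) :
    det (aug M w) = ∑ i, w i * det (aug M (Pi.single i 1)) := by
  rw [det_aug]
  exact Finset.sum_congr rfl fun i _ => by rw [det_aug_single]

/-- coefficient of a product at the sum of degree bounds -/
lemma coeff_mul_of_natDegree_le' {p q : R[X]} {a b : ℕ}
    (hp : p.natDegree ≤ a) (hq : q.natDegree ≤ b) :
    (p * q).coeff (a + b) = p.coeff a * q.coeff b := by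
  rw [Polynomial.coeff_mul]
  rw [Finset.sum_eq_single (a, b)]
  · intro x hx hne
    rcases Finset.HasAntidiagonal.mem_antidiagonal.1 hx with h
    rcases lt_or_ge a x.1 with h1 | h1
    · rw [Polynomial.coeff_eq_zero_of_natDegree_lt (lt_of_le_of_lt hp h1), zero_mul]
    · have : b < x.2 := by
        rcases lt_or_eq_of_le h1 with h2 | h2
        · omega
        · exfalso; apply hne; rw [Prod.ext_iff]; constructor <;> omega
      rw [Polynomial.coeff_eq_zero_of_natDegree_lt (lt_of_le_of_lt hq this), mul_zero]
  · intro h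
    exfalso
    exact h (Finset.HasAntidiagonal.mem_antidiagonal.2 rfl)

lemma coeff_prod_of_natDegree_le' {ι : Type*} (s : Finset ι) (f : ι → R[X]) (d : ι → ℕ)
    (h : ∀ i ∈ s, (f i).natDegree ≤ d i) :
    (∏ i ∈ s, f i).coeff (∑ i ∈ s, d i) = ∏ i ∈ s, (f i).coeff (d i) := by
  classical
  induction s using Finset.induction_on with
  | empty => simp
  | insert _ _ hni ih =>
    rename_i a s
    rw [Finset.prod_insert hni, Finset.sum_insert hni, Finset.prod_insert hni,
      coeff_mul_of_natDegree_le' (h a (Finset.mem_insert_self a s))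
        (le_trans (Polynomial.natDegree_prod_le s f) (Finset.sum_le_sum fun i hi => h i (Finset.mem_insert_of_mem hi))),
      ih (fun i hi => h i (Finset.mem_insert_of_mem hi))]

/-- coefficient of a determinant at the sum of row degree bounds -/
lemma coeff_det (n : ℕ) (S : Matrix (Fin n) (Fin n) R[X]) (d : Fin n → ℕ)
    (h : ∀ i k, (S i k).natDegree ≤ d i) :
    (det S).coeff (∑ i, d i) = det (Matrix.of fun i k => (S i k).coeff (d i)) := by
  rw [Matrix.det_apply, Matrix.det_apply, Polynomial.finset_sum_coeff]
  refine Finset.sum_congr rfl fun σ _ => ?_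
  have key : (∏ i, S (σ i) i).coeff (∑ i, d i) = ∏ i, (S (σ i) i).coeff (d (σ i)) := by
    have hs : ∑ i, d i = ∑ i, d (σ i) := (Equiv.sum_comp σ d).symm
    rw [hs, coeff_prod_of_natDegree_le' _ _ _ (fun i _ => h (σ i) i)]
  rw [Polynomial.coeff_smul, key]
  rfl

lemma natDegree_det_le (n : ℕ) (S : Matrix (Fin n) (Fin n) R[X]) (d : Fin n → ℕ)
    (h : ∀ i k, (S i k).natDegree ≤ d i) :
    (det S).natDegree ≤ ∑ i, d i := by
  rw [Matrix.det_apply]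
  refine le_trans (Polynomial.natDegree_sum_le _ _) ?_
  rw [Finset.fold_max_le]
  refine ⟨Nat.zero_le _, fun σ _ => ?_⟩
  have h2 : ((Equiv.Perm.sign σ : ℤ) • ∏ i, S (σ i) i) = ((Equiv.Perm.sign σ : ℤ) : R[X]) * ∏ i, S (σ i) i := by
    rw [zsmul_eq_mul]
  have h1 : (Equiv.Perm.sign σ • ∏ i, S (σ i) i : R[X]).natDegree ≤ (∏ i, S (σ i) i).natDegree := by
    rw [Units.smul_def, h2]
    refine le_trans (Polynomial.natDegree_mul_le) ?_
    simp [Polynomial.natDegree_intCast]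
  refine le_trans h1 (le_trans (Polynomial.natDegree_prod_le _ _) ?_)
  have hs : ∑ i, d i = ∑ i, d (σ i) := (Equiv.sum_comp σ d).symm
  rw [hs]
  exact Finset.sum_le_sum fun i _ => h (σ i) i


/-! ### Pencils of matrices over ℂ -/

lemma det_map' {S T : Type*} [CommRing S] [CommRing T] (f : S →+* T) {n : ℕ}
    (M : Matrix (Fin n) (Fin n) S) : (M.map f).det = f M.det := by
  have h := RingHom.map_det f M
  simp only [RingHom.mapMatrix_apply] at h
  exact h.symm

/-- the polynomial matrix `P + X Q` -/
noncomputable def pmat {m : ℕ} (P Q : Matrix (Fin m) (Fin (m+1)) ℂ) : Matrix (Fin m) (Fin (m+1)) ℂ[X] :=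
  fun r c => Polynomial.C (P r c) + Polynomial.X * Polynomial.C (Q r c)

/-- the evaluated pencil member `P + a Q` -/
def pev {m : ℕ} (P Q : Matrix (Fin m) (Fin (m+1)) ℂ) (a : ℂ) : Matrix (Fin m) (Fin (m+1)) ℂ :=
  fun r c => P r c + a * Q r c

lemma pmat_eval {m : ℕ} (P Q : Matrix (Fin m) (Fin (m+1)) ℂ) (a : ℂ) (r c) :
    (pmat P Q r c).eval a = pev P Q a r c := by
  simp [pmat, pev]; ring

/-- If `w` lies in the row span of every member `P + aQ` of an everywhere-injective
affine pencil (with `Q` itself injective), then `w = 0`. -/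
lemma stepA {m : ℕ} (P Q : Matrix (Fin m) (Fin (m+1)) ℂ)
    (hP : ∀ a : ℂ, ∀ x, x ≠ 0 → vecMul x (pev P Q a) ≠ 0)
    (hQ : ∀ x, x ≠ 0 → vecMul x Q ≠ 0)
    (w : Fin (m+1) → ℂ)
    (hw : ∀ a : ℂ, ∃ x, vecMul x (pev P Q a) = w) :
    w = 0 := by
  classical
  -- an auxiliary induction: from a polynomial relation ∑ r, xh r • (row r) + δ • w = 0
  have aux : ∀ n : ℕ, ∀ (δ : ℂ[X]) (xh : Fin m → ℂ[X]), δ.natDegree ≤ n →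
      (∀ c, (∑ r, xh r * pmat P Q r c) + δ * Polynomial.C (w c) = 0) →
      (xh ≠ 0 ∨ δ ≠ 0) → w = 0 := by
    intro n
    induction n with
    | zero =>
      intro δ xh hdeg hid hne
      by_cases hδ : δ = 0
      · exfalso
        have hxh : xh ≠ 0 := by
          rcases hne with h | h
          · exact h
          · exact absurd hδ h
        have hj : ∃ j, xh j ≠ 0 := by
          by_contra h; push_neg at h; exact hxh (funext h)
        obtain ⟨j, hj⟩ := hj
        have ha : ∃ a : ℂ, (xh j).eval a ≠ 0 := by
          by_contra h; push_neg at h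
          exact hj (Polynomial.zero_of_eval_zero _ h)
        obtain ⟨a, ha⟩ := ha
        apply hP a (fun r => (xh r).eval a) (fun h0 => ha (congrFun h0 j))
        funext c
        have h := congrArg (Polynomial.eval a) (hid c)
        simp only [Polynomial.eval_add, Polynomial.eval_mul, Polynomial.eval_C,
          Polynomial.eval_finset_sum, hδ, Polynomial.eval_zero, zero_mul, add_zero] at h
        have h2 : ∑ r, (xh r).eval a * pev P Q a r c = 0 := by
          rw [← h]
          exact Finset.sum_congr rfl fun r _ => by rw [pmat_eval]
        simpa [vecMul, dotProduct] using h2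
      · -- δ is a nonzero constant
        by_cases hxh : xh = 0
        · funext c
          have h := hid c
          rw [hxh] at h
          simp only [Pi.zero_apply, zero_mul, Finset.sum_const_zero, zero_add] at h
          rcases mul_eq_zero.1 h with h1 | h2
          · exact absurd h1 hδ
          · simpa using (Polynomial.C_eq_zero.1 h2)
        · exfalso
          set d := Finset.univ.sup (fun r => (xh r).natDegree) with hd
          -- there is r₀ with natDegree = d and xh r₀ ≠ 0
          have hj : ∃ j, xh j ≠ 0 := by
            by_contra h; push_neg at h; exact hxh (funext h)
          obtain ⟨j, hj⟩ := hj
          have hr0 : ∃ r₀, xh r₀ ≠ 0 ∧ (xh r₀).natDegree = d := by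
            obtain ⟨r₀, _, hr₀⟩ := Finset.exists_mem_eq_sup Finset.univ
              ⟨j, Finset.mem_univ j⟩ (fun r => (xh r).natDegree)
            by_cases hd0 : d = 0
            · refine ⟨j, hj, ?_⟩
              have h1 : (xh j).natDegree ≤ d := by
                rw [hd]; exact Finset.le_sup (f := fun r => (xh r).natDegree) (Finset.mem_univ j)
              omega
            · refine ⟨r₀, ?_, hr₀.symm⟩
              intro h0
              apply hd0
              rw [hd, hr₀, h0]
              simp
          obtain ⟨r₀, hr₀ne, hr₀d⟩ := hr0
          -- coefficient of degree d+1 in the identity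
          have hco : ∀ c, ∑ r, (xh r).coeff d * Q r c = 0 := by
            intro c
            have h := congrArg (fun p => Polynomial.coeff p (d+1)) (hid c)
            simp only [Polynomial.coeff_add, Polynomial.finset_sum_coeff, Polynomial.coeff_zero] at h
            have hterm : ∀ r, (xh r * pmat P Q r c).coeff (d+1) = (xh r).coeff d * Q r c := by
              intro r
              have hsplit : xh r * pmat P Q r c
                  = xh r * Polynomial.C (P r c) + (xh r * Polynomial.X) * Polynomial.C (Q r c) := by
                rw [pmat]; ring
              rw [hsplit, Polynomial.coeff_add, Polynomial.coeff_mul_C, Polynomial.coeff_mul_C,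
                Polynomial.coeff_mul_X]
              have hz : (xh r).coeff (d+1) = 0 := by
                apply Polynomial.coeff_eq_zero_of_natDegree_lt
                have h9 : (xh r).natDegree ≤ d := by
                  rw [hd]; exact Finset.le_sup (f := fun r => (xh r).natDegree) (Finset.mem_univ r)
                omega
              rw [hz, zero_mul, zero_add]
            have hδc : (δ * Polynomial.C (w c)).coeff (d+1) = 0 := by
              apply Polynomial.coeff_eq_zero_of_natDegree_lt
              have h1 := Polynomial.natDegree_mul_le (p := δ) (q := Polynomial.C (w c))
              simp only [Polynomial.natDegree_C] at h1
              omega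
            rw [hδc, add_zero] at h
            rw [← h]
            exact (Finset.sum_congr rfl fun r _ => (hterm r).symm)
          apply hQ (fun r => (xh r).coeff d)
          · intro h0
            have := congrFun h0 r₀
            simp only [Pi.zero_apply] at this
            rw [← hr₀d] at this
            exact Polynomial.leadingCoeff_ne_zero.2 hr₀ne this
          · funext c
            simpa [vecMul, dotProduct] using hco c
    | succ n ih =>
      intro δ xh hdeg hid hne
      by_cases hδn : δ.natDegree ≤ n
      · exact ih δ xh hδn hid hne
      · have hdd : δ.natDegree = n + 1 := le_antisymm hdeg (by omega)
        have hδ0 : δ ≠ 0 := by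
          intro h; rw [h] at hdd; simp at hdd
        obtain ⟨α, hα⟩ := Complex.exists_root (f := δ)
          (by rw [Polynomial.degree_eq_natDegree hδ0, hdd]; exact_mod_cast Nat.succ_pos n)
        -- evaluating the identity at α kills δ, so the evaluated xh must vanish
        have hev0 : ∀ r, (xh r).eval α = 0 := by
          by_contra h
          push_neg at h
          obtain ⟨j, hj⟩ := h
          apply hP α (fun r => (xh r).eval α) (fun h0 => hj (congrFun h0 j))
          funext c
          have h := congrArg (Polynomial.eval α) (hid c)
          simp only [Polynomial.eval_add, Polynomial.eval_mul, Polynomial.eval_C,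
            Polynomial.eval_finset_sum, Polynomial.eval_zero] at h
          rw [hα, zero_mul, add_zero] at h
          have h2 : ∑ r, (xh r).eval α * pev P Q α r c = 0 := by
            rw [← h]
            exact Finset.sum_congr rfl fun r _ => by rw [pmat_eval]
          simpa [vecMul, dotProduct] using h2
        have hdvd : ∀ r, (Polynomial.X - Polynomial.C α) ∣ xh r :=
          fun r => Polynomial.dvd_iff_isRoot.2 (hev0 r)
        choose xh' hxh' using hdvd
        obtain ⟨δ', hδ'⟩ := Polynomial.dvd_iff_isRoot.2 hα
        have hδ'0 : δ' ≠ 0 := by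
          intro h; rw [h, mul_zero] at hδ'; exact hδ0 hδ'
        have hid' : ∀ c, (∑ r, xh' r * pmat P Q r c) + δ' * Polynomial.C (w c) = 0 := by
          intro c
          have hfac : (Polynomial.X - Polynomial.C α) *
              ((∑ r, xh' r * pmat P Q r c) + δ' * Polynomial.C (w c)) = 0 := by
            rw [mul_add, Finset.mul_sum]
            have h1 : ∀ r, (Polynomial.X - Polynomial.C α) * (xh' r * pmat P Q r c)
                = xh r * pmat P Q r c := by
              intro r; rw [hxh' r]; ring
            rw [Finset.sum_congr rfl fun r _ => h1 r]
            have h2 : (Polynomial.X - Polynomial.C α) * (δ' * Polynomial.C (w c))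
                = δ * Polynomial.C (w c) := by
              rw [hδ']; ring
            rw [h2]
            exact hid c
          rcases mul_eq_zero.1 hfac with h1 | h2
          · exact absurd h1 (Polynomial.X_sub_C_ne_zero α)
          · exact h2
        have hδ'deg : δ'.natDegree ≤ n := by
          have h := Polynomial.natDegree_mul (Polynomial.X_sub_C_ne_zero α) hδ'0
          rw [← hδ', Polynomial.natDegree_X_sub_C] at h
          omega
        exact ih δ' xh' hδ'deg hid' (Or.inr hδ'0)
  -- Now construct the polynomial relation.
  set wC : Fin (m+1) → ℂ[X] := fun c => Polynomial.C (w c) with hwC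
  have hdet : det (aug (pmat P Q) wC) = 0 := by
    apply Polynomial.zero_of_eval_zero
    intro a
    have h2 : (Matrix.of fun r c => (Polynomial.evalRingHom a) (pmat P Q r c)) = pev P Q a := by
      ext r c; simpa using pmat_eval P Q a r c
    have h3 : (fun c => (Polynomial.evalRingHom a) (wC c)) = w := by
      funext c; simp [hwC]
    have h4 : Polynomial.eval a (det (aug (pmat P Q) wC)) = det (aug (pev P Q a) w) := by
      have h1 := det_map' (Polynomial.evalRingHom a) (aug (pmat P Q) wC)
      rw [aug_map, h2, h3] at h1
      exact h1.symm
    rw [h4]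
    obtain ⟨x, hx⟩ := hw a
    rw [← hx]
    exact det_aug_eq_zero_of_mem _ x
  obtain ⟨u, hu, hker⟩ := (det_eq_zero_iff_vecMul _).1 hdet
  rw [vecMul_aug] at hker
  set xh : Fin m → ℂ[X] := fun r => u r.castSucc with hxh
  set δ := u (Fin.last m) with hδdef
  have hid : ∀ c, (∑ r, xh r * pmat P Q r c) + δ * Polynomial.C (w c) = 0 := by
    intro c
    have h := congrFun hker c
    simpa [vecMul, dotProduct, hwC, hxh, hδdef] using h
  have hne : xh ≠ 0 ∨ δ ≠ 0 := by
    by_contra h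
    push_neg at h
    obtain ⟨h1, h2⟩ := h
    apply hu
    funext i
    refine Fin.lastCases ?_ (fun r => ?_) i
    · exact h2
    · exact congrFun h1 r
  exact aux δ.natDegree δ xh le_rfl hid hne


lemma det_aug_pmat_eval {m : ℕ} (P Q : Matrix (Fin m) (Fin (m+1)) ℂ)
    (wv : Fin (m+1) → ℂ) (a : ℂ) :
    Polynomial.eval a (det (aug (pmat P Q) (fun c => Polynomial.C (wv c))))
      = det (aug (pev P Q a) wv) := by
  have h2 : (Matrix.of fun r c => (Polynomial.evalRingHom a) (pmat P Q r c)) = pev P Q a := by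
    ext r c; simpa using pmat_eval P Q a r c
  have h3 : (fun c => (Polynomial.evalRingHom a) (Polynomial.C (wv c))) = wv := by
    funext c; simp
  have h1 := det_map' (Polynomial.evalRingHom a) (aug (pmat P Q) (fun c => Polynomial.C (wv c)))
  rw [aug_map, h2, h3] at h1
  exact h1.symm

lemma natDegree_det_aug_pmat_le {m : ℕ} (P Q : Matrix (Fin m) (Fin (m+1)) ℂ)
    (wv : Fin (m+1) → ℂ[X]) (hw : ∀ c, (wv c).natDegree = 0) :
    (det (aug (pmat P Q) wv)).natDegree ≤ m := by
  have h := natDegree_det_le (m+1) (aug (pmat P Q) wv)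
    (fun i => Fin.lastCases 0 (fun _ => 1) i) ?_
  · refine le_trans h (le_of_eq ?_)
    rw [Fin.sum_univ_castSucc]
    simp
  · intro i k
    refine Fin.lastCases ?_ (fun r => ?_) i
    · rw [aug_last]
      simp only [Fin.lastCases_last]
      exact le_of_eq (hw k)
    · rw [aug_castSucc]
      simp only [Fin.lastCases_castSucc]
      refine le_trans (Polynomial.natDegree_add_le _ _) ?_
      refine max_le (by simp) ?_
      refine le_trans (Polynomial.natDegree_mul_le) ?_
      simp

/-- coefficient matrix of the cofactor polynomials of an everywhere-injective pencil
is nonsingular. -/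
lemma stepB {m : ℕ} (P Q : Matrix (Fin m) (Fin (m+1)) ℂ)
    (hP : ∀ a : ℂ, ∀ x, x ≠ 0 → vecMul x (pev P Q a) ≠ 0)
    (hQ : ∀ x, x ≠ 0 → vecMul x Q ≠ 0) :
    det (Matrix.of fun (i k : Fin (m+1)) =>
      (det (aug (pmat P Q) (Pi.single i 1))).coeff (k : ℕ)) ≠ 0 := by
  intro h0
  obtain ⟨wv, hw0, hker⟩ := (det_eq_zero_iff_vecMul _).1 h0
  have hq0 : det (aug (pmat P Q) (fun c => Polynomial.C (wv c))) = 0 := by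
    rw [det_aug_eq_sum]
    apply Polynomial.ext
    intro n
    rw [Polynomial.finset_sum_coeff, Polynomial.coeff_zero]
    by_cases hn : n ≤ m
    · have h := congrFun hker ⟨n, by omega⟩
      simp only [vecMul, dotProduct, Matrix.of_apply, Pi.zero_apply] at h
      rw [← h]
      refine Finset.sum_congr rfl fun i _ => ?_
      rw [Polynomial.coeff_C_mul]
    · refine Finset.sum_eq_zero fun i _ => ?_
      rw [Polynomial.coeff_C_mul]
      have hdeg : (det (aug (pmat P Q) (Pi.single i 1))).natDegree ≤ m := by
        apply natDegree_det_aug_pmat_le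
        intro c
        by_cases hc : c = i
        · subst hc; simp
        · simp [Pi.single_eq_of_ne hc]
      rw [Polynomial.coeff_eq_zero_of_natDegree_lt (by omega), mul_zero]
  have hww : ∀ a : ℂ, ∃ x, vecMul x (pev P Q a) = wv := by
    intro a
    apply exists_vecMul_of_det_aug _ _ (hP a)
    rw [← det_aug_pmat_eval P Q wv a, hq0, Polynomial.eval_zero]
  exact hw0 (stepA P Q hP hQ wv hww)


/-! ### Total degree control for bivariate polynomials -/

/-- total degree bound for an element of `R[b][a]` -/
def TD {R : Type*} [CommRing R] (d : ℕ) (p : Polynomial (Polynomial R)) : Prop :=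
  ∀ k j : ℕ, d < k + j → ((p.coeff k).coeff j) = 0

namespace TD

variable {R : Type*} [CommRing R]

lemma mul {d e : ℕ} {p q : Polynomial (Polynomial R)} (hp : TD d p) (hq : TD e q) :
    TD (d + e) (p * q) := by
  intro k j hkj
  rw [Polynomial.coeff_mul, Polynomial.finset_sum_coeff]
  refine Finset.sum_eq_zero fun x hx => ?_
  rw [Polynomial.coeff_mul]
  refine Finset.sum_eq_zero fun y hy => ?_
  have hxk := Finset.HasAntidiagonal.mem_antidiagonal.1 hx
  have hyj := Finset.HasAntidiagonal.mem_antidiagonal.1 hy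
  by_cases h1 : d < x.1 + y.1
  · rw [hp _ _ h1, zero_mul]
  · rw [hq _ _ (by omega), mul_zero]

lemma one : TD (R := R) 0 1 := by
  intro k j hkj
  rcases Nat.eq_zero_or_pos k with hk | hk
  · subst hk
    have hj : j ≠ 0 := by omega
    simp [Polynomial.coeff_one, hj]
  · have hk' : k ≠ 0 := by omega
    simp [Polynomial.coeff_one, hk']

lemma zero {d : ℕ} : TD (R := R) d 0 := by
  intro k j _; simp

lemma prod {ι : Type*} (s : Finset ι) (f : ι → Polynomial (Polynomial R)) (d : ι → ℕ)
    (h : ∀ i ∈ s, TD (d i) (f i)) :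
    TD (∑ i ∈ s, d i) (∏ i ∈ s, f i) := by
  classical
  induction s using Finset.induction_on with
  | empty => simpa using one
  | insert _ _ hni ih =>
    rename_i a s
    rw [Finset.prod_insert hni, Finset.sum_insert hni]
    exact mul (h a (Finset.mem_insert_self a s)) (ih fun i hi => h i (Finset.mem_insert_of_mem hi))

lemma zsmul {d : ℕ} {p : Polynomial (Polynomial R)} (u : ℤˣ) (hp : TD d p) :
    TD d (u • p) := by
  intro k j hkj
  rw [Units.smul_def, Polynomial.coeff_smul, Polynomial.coeff_smul, hp _ _ hkj, smul_zero]

lemma sum {ι : Type*} (s : Finset ι) (f : ι → Polynomial (Polynomial R)) (d : ℕ)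
    (h : ∀ i ∈ s, TD d (f i)) : TD d (∑ i ∈ s, f i) := by
  intro k j hkj
  rw [Polynomial.finset_sum_coeff, Polynomial.finset_sum_coeff]
  exact Finset.sum_eq_zero fun i hi => h i hi k j hkj

end TD

lemma TD_det {R : Type*} [CommRing R] {n : ℕ} (S : Matrix (Fin n) (Fin n) (Polynomial (Polynomial R)))
    (d : Fin n → ℕ) (h : ∀ i k, TD (d i) (S i k)) :
    TD (∑ i, d i) (det S) := by
  rw [Matrix.det_apply]
  refine TD.sum _ _ _ fun σ _ => ?_
  refine TD.zsmul _ ?_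
  have hs : ∑ i, d i = ∑ i, d (σ i) := (Equiv.sum_comp σ d).symm
  rw [hs]
  exact TD.prod _ _ _ fun i _ => h (σ i) i


/-! ### The bivariate cofactor construction -/

section Core

variable {m : ℕ} (MA MB MC : Matrix (Fin m) (Fin (m+1)) ℂ)

/-- bivariate pencil matrix: entries `MC + a•MA + b•MB`, living in `(ℂ[b])[a]` -/
noncomputable def E2 : Matrix (Fin m) (Fin (m+1)) (Polynomial (Polynomial ℂ)) :=
  Matrix.of fun r c =>
    Polynomial.C (Polynomial.C (MC r c) + Polynomial.C (MB r c) * Polynomial.X)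
      + Polynomial.C (Polynomial.C (MA r c)) * Polynomial.X

/-- the `i`-th cofactor polynomial of the bivariate pencil -/
noncomputable def ghat (i : Fin (m+1)) : Polynomial (Polynomial ℂ) :=
  det (aug (E2 MA MB MC) (Pi.single i 1))

lemma coeff_C_add_C_mul_X {R : Type*} [CommRing R] (p q : Polynomial R) (k : ℕ) :
    (Polynomial.C p + Polynomial.C q * Polynomial.X).coeff k
      = if k = 0 then p else if k = 1 then q else 0 := by
  rw [Polynomial.coeff_add, ← pow_one (Polynomial.X : Polynomial (Polynomial R)),
    Polynomial.coeff_mul_X_pow', Polynomial.coeff_C]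
  rcases k with _ | k
  · simp
  · rcases k with _ | k
    · simp
    · simp

lemma TD_E2_entry (r : Fin m) (c : Fin (m+1)) : TD (R := ℂ) 1 (E2 MA MB MC r c) := by
  intro k j hkj
  simp only [E2, Matrix.of_apply]
  rw [coeff_C_add_C_mul_X]
  rcases k with _ | k
  · have hj0 : ¬ j = 0 := by omega
    have hj1 : ¬ j = 1 := by omega
    have hj1' : ¬ (1 = j) := by omega
    simp [coeff_C_add_C_mul_X, Polynomial.coeff_C, Polynomial.coeff_X, hj0, hj1, hj1']
  · rcases k with _ | k
    · have hj0 : ¬ j = 0 := by omega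
      simp [Polynomial.coeff_C, hj0]
    · simp

lemma TD_single_entry (i c : Fin (m+1)) :
    TD (R := ℂ) 0 ((Pi.single i 1 : Fin (m+1) → Polynomial (Polynomial ℂ)) c) := by
  by_cases hc : c = i
  · subst hc; rw [Pi.single_eq_same]; exact TD.one
  · rw [Pi.single_eq_of_ne hc]; exact TD.zero

lemma TD_ghat (i : Fin (m+1)) : TD m (ghat MA MB MC i) := by
  have h := TD_det (aug (E2 MA MB MC) (Pi.single i 1))
    (fun i' => Fin.lastCases 0 (fun _ => 1) i') ?_
  · have hsum : (∑ i' : Fin (m+1), (fun i' => Fin.lastCases (motive := fun _ => ℕ) 0 (fun _ => 1) i') i') = m := by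
      rw [Fin.sum_univ_castSucc]
      simp
    rw [hsum] at h
    exact h
  · intro i' k
    refine Fin.lastCases ?_ (fun r => ?_) i'
    · rw [aug_last]
      simp only [Fin.lastCases_last]
      exact TD_single_entry i k
    · rw [aug_castSucc]
      simp only [Fin.lastCases_castSucc]
      exact TD_E2_entry MA MB MC r k

lemma natDegree_ghat_le (i : Fin (m+1)) : (ghat MA MB MC i).natDegree ≤ m := by
  rw [Polynomial.natDegree_le_iff_coeff_eq_zero]
  intro n hn
  apply Polynomial.ext
  intro j
  rw [TD_ghat MA MB MC i n j (by omega), Polynomial.coeff_zero]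

lemma sum_lastCases_one : (∑ i' : Fin (m+1), Fin.lastCases (motive := fun _ => ℕ) 0 (fun _ => 1) i') = m := by
  rw [Fin.sum_univ_castSucc]
  simp

/-- `b`-coefficient ring inclusion `ℂ[b] → (ℂ[a'])[b]` -/
noncomputable def sigb : Polynomial ℂ →+* Polynomial (Polynomial ℂ) :=
  Polynomial.mapRingHom (Polynomial.C : ℂ →+* Polynomial ℂ)

/-- the substitution `a ↦ a'·b`, `b ↦ b`, from `(ℂ[b])[a]` to `(ℂ[a'])[b]` -/
noncomputable def tau : Polynomial (Polynomial ℂ) →+* Polynomial (Polynomial ℂ) :=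
  Polynomial.eval₂RingHom sigb (Polynomial.C Polynomial.X * Polynomial.X)

/-- image of the bivariate pencil under `tau`: affine in `b` with linear part `pmat MB MA` -/
noncomputable def E3 : Matrix (Fin m) (Fin (m+1)) (Polynomial (Polynomial ℂ)) :=
  Matrix.of fun r c =>
    Polynomial.C (Polynomial.C (MC r c)) + Polynomial.C (pmat MB MA r c) * Polynomial.X

lemma tau_E2 (r : Fin m) (c : Fin (m+1)) :
    tau (E2 MA MB MC r c) = E3 MA MB MC r c := by
  simp only [E2, E3, tau, sigb, Matrix.of_apply, Polynomial.coe_eval₂RingHom,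
    Polynomial.eval₂_add, Polynomial.eval₂_mul, Polynomial.eval₂_C, Polynomial.eval₂_X,
    Polynomial.coe_mapRingHom, Polynomial.map_add, Polynomial.map_mul, Polynomial.map_C,
    Polynomial.map_X, pmat, Polynomial.C_add, Polynomial.C_mul]
  ring

lemma tau_ghat (i : Fin (m+1)) :
    tau (ghat MA MB MC i) = det (aug (E3 MA MB MC) (Pi.single i 1)) := by
  rw [ghat, ← det_map' tau (aug (E2 MA MB MC) (Pi.single i 1)), aug_map]
  have h1 : (Matrix.of fun r c => tau (E2 MA MB MC r c)) = E3 MA MB MC :=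
    Matrix.ext fun r c => tau_E2 MA MB MC r c
  have h2 : (fun c => tau ((Pi.single i 1 : Fin (m+1) → Polynomial (Polynomial ℂ)) c))
      = (Pi.single i 1 : Fin (m+1) → Polynomial (Polynomial ℂ)) := by
    funext c
    by_cases hc : c = i
    · subst hc; simp
    · simp [Pi.single_eq_of_ne hc]
  rw [h1, h2]

lemma coeff_m_tau_ghat (i : Fin (m+1)) :
    (tau (ghat MA MB MC i)).coeff m = det (aug (pmat MB MA) (Pi.single i 1)) := by
  rw [tau_ghat]
  have h := coeff_det (m+1) (aug (E3 MA MB MC) (Pi.single i 1))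
    (fun i' => Fin.lastCases 0 (fun _ => 1) i') ?_
  · rw [sum_lastCases_one] at h
    rw [h]
    congr 1
    ext i' k
    refine Fin.lastCases ?_ (fun r => ?_) i'
    · rw [Matrix.of_apply, aug_last, aug_last]
      simp only [Fin.lastCases_last]
      by_cases hk : k = i
      · subst hk; simp
      · simp [Pi.single_eq_of_ne hk]
    · rw [Matrix.of_apply, aug_castSucc, aug_castSucc]
      simp only [Fin.lastCases_castSucc, E3, Matrix.of_apply]
      rw [coeff_C_add_C_mul_X]
      simp
  · intro i' k
    refine Fin.lastCases ?_ (fun r => ?_) i'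
    · rw [aug_last]
      simp only [Fin.lastCases_last]
      by_cases hk : k = i
      · subst hk; simp
      · simp [Pi.single_eq_of_ne hk]
    · rw [aug_castSucc]
      simp only [Fin.lastCases_castSucc, E3, Matrix.of_apply]
      refine le_trans (Polynomial.natDegree_add_le _ _) ?_
      refine max_le (by simp) ?_
      refine le_trans (Polynomial.natDegree_mul_le) ?_
      simp

lemma coeff_m_tau_ghat' (i : Fin (m+1)) :
    (tau (ghat MA MB MC i)).coeff m
      = ∑ k' ∈ Finset.range (m+1),
          Polynomial.C (((ghat MA MB MC i).coeff k').coeff (m - k')) * Polynomial.X ^ k' := by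
  have h4 : tau (ghat MA MB MC i)
      = ∑ k' ∈ Finset.range (m+1),
          sigb ((ghat MA MB MC i).coeff k') * (Polynomial.C Polynomial.X * Polynomial.X) ^ k' := by
    rw [tau, Polynomial.coe_eval₂RingHom]
    exact Polynomial.eval₂_eq_sum_range'  sigb
      (lt_of_le_of_lt (natDegree_ghat_le MA MB MC i) (Nat.lt_succ_self m)) _
  rw [h4, Polynomial.finset_sum_coeff]
  refine Finset.sum_congr rfl fun k' hk' => ?_
  have hk'm : k' ≤ m := by
    have := Finset.mem_range.1 hk'
    omega
  rw [mul_pow, ← Polynomial.C_pow, ← mul_assoc, Polynomial.coeff_mul_X_pow', if_pos hk'm,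
    Polynomial.coeff_mul_C]
  congr 1
  rw [sigb, Polynomial.coe_mapRingHom, Polynomial.coeff_map]

/-- The key identity: the coefficient matrix of the `(MB, MA)`-pencil cofactors equals
the top-coefficient matrix of the bivariate cofactors. -/
lemma bridge (i k : Fin (m+1)) :
    (det (aug (pmat MB MA) (Pi.single i 1))).coeff (k : ℕ)
      = ((ghat MA MB MC i).coeff (k : ℕ)).coeff (m - (k : ℕ)) := by
  have h := (coeff_m_tau_ghat MA MB MC i).symm.trans (coeff_m_tau_ghat' MA MB MC i)
  rw [h, Polynomial.finset_sum_coeff]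
  rw [Finset.sum_eq_single (k : ℕ)]
  · rw [Polynomial.coeff_C_mul, Polynomial.coeff_X_pow, if_pos rfl, mul_one]
  · intro b _ hb
    rw [Polynomial.coeff_C_mul, Polynomial.coeff_X_pow, if_neg (fun hh => hb hh.symm), mul_zero]
  · intro hk
    exfalso
    exact hk (Finset.mem_range.2 (by omega))

/-- **Core theorem** (a case of Hopf's theorem over ℂ): there is no triple of
`m × (m+1)` matrices all of whose nontrivial linear combinations have independent rows. -/
theorem core (hm : 1 ≤ m)
    (hAll : ∀ a b c : ℂ, ¬(a = 0 ∧ b = 0 ∧ c = 0) → ∀ x, x ≠ 0 →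
      vecMul x (Matrix.of fun r co => a * MA r co + b * MB r co + c * MC r co) ≠ 0) :
    False := by
  classical
  -- injectivity of the various pencils we use
  have hQA : ∀ x, x ≠ 0 → vecMul x MA ≠ 0 := by
    intro x hx h
    refine hAll 1 0 0 (by norm_num) x hx ?_
    have he : (Matrix.of fun r co => (1:ℂ) * MA r co + 0 * MB r co + 0 * MC r co) = MA :=
      Matrix.ext fun r co => by rw [Matrix.of_apply]; ring
    rwa [he]
  have hPB : ∀ a : ℂ, ∀ x, x ≠ 0 → vecMul x (pev MB MA a) ≠ 0 := by
    intro a x hx h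
    refine hAll a 1 0 (by norm_num) x hx ?_
    have he : (Matrix.of fun r co => a * MA r co + 1 * MB r co + 0 * MC r co) = pev MB MA a :=
      Matrix.ext fun r co => by rw [Matrix.of_apply]; simp [pev]; ring
    rwa [he]
  -- the determinant H(b) of the coefficient matrix of the bivariate cofactors
  set J : Matrix (Fin (m+1)) (Fin (m+1)) (Polynomial ℂ) :=
    Matrix.of fun k i => (ghat MA MB MC i).coeff (k : ℕ) with hJ
  set H : Polynomial ℂ := det J with hH
  set D : ℕ := ∑ k : Fin (m+1), (m - (k : ℕ)) with hD
  -- top coefficient of H is the determinant of the pencil cofactor coefficient matrix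
  have htop : H.coeff D = det (Matrix.of fun (i k : Fin (m+1)) =>
      (det (aug (pmat MB MA) (Pi.single i 1))).coeff (k : ℕ)) := by
    have h1 : H.coeff D = det (Matrix.of fun (k i : Fin (m+1)) =>
        ((ghat MA MB MC i).coeff (k : ℕ)).coeff (m - (k : ℕ))) := by
      rw [hH, hD]
      have h := coeff_det (m+1) J (fun k => m - (k : ℕ)) ?_
      · rw [h]
        congr 1
      · intro k i
        rw [hJ]
        simp only [Matrix.of_apply]
        rw [Polynomial.natDegree_le_iff_coeff_eq_zero]
        intro j hj
        have hkm : (k : ℕ) < m + 1 := k.isLt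
        exact TD_ghat MA MB MC i (k : ℕ) j (by omega)
    rw [h1]
    have h2 : (Matrix.of fun (k i : Fin (m+1)) =>
        ((ghat MA MB MC i).coeff (k : ℕ)).coeff (m - (k : ℕ)))
        = (Matrix.of fun (i k : Fin (m+1)) =>
            (det (aug (pmat MB MA) (Pi.single i 1))).coeff (k : ℕ))ᵀ :=
      Matrix.ext fun k i => by
        rw [Matrix.transpose_apply, Matrix.of_apply, Matrix.of_apply,
          bridge MA MB MC i k]
    rw [h2, Matrix.det_transpose]
  have hPsi : det (Matrix.of fun (i k : Fin (m+1)) =>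
      (det (aug (pmat MB MA) (Pi.single i 1))).coeff (k : ℕ)) ≠ 0 :=
    stepB MB MA hPB hQA
  have hcoeff : H.coeff D ≠ 0 := by rw [htop]; exact hPsi
  have hD1 : m ≤ D := by
    rw [hD]
    have h := Finset.single_le_sum (f := fun k : Fin (m+1) => m - (k : ℕ))
      (fun i _ => Nat.zero_le _) (Finset.mem_univ (0 : Fin (m+1)))
    simpa using h
  have hH0 : H ≠ 0 := fun h => hcoeff (by rw [h, Polynomial.coeff_zero])
  have hdeg : 0 < H.degree := by
    rw [← Polynomial.natDegree_pos_iff_degree_pos]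
    have := Polynomial.le_natDegree_of_ne_zero hcoeff
    omega
  obtain ⟨b₀, hb₀⟩ := Complex.exists_root hdeg
  have hb0 : H.eval b₀ = 0 := hb₀
  -- evaluate the coefficient matrix at b₀ and find a kernel vector
  set Jev : Matrix (Fin (m+1)) (Fin (m+1)) ℂ :=
    Matrix.of fun (k i : Fin (m+1)) => ((ghat MA MB MC i).coeff (k : ℕ)).eval b₀ with hJev
  have hJevdet : Jev.det = 0 := by
    have h1 : J.map (Polynomial.evalRingHom b₀) = Jev :=
      Matrix.ext fun k i => by simp [hJ, hJev, Matrix.map_apply]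
    have h2 := det_map' (Polynomial.evalRingHom b₀) J
    rw [h1] at h2
    rw [h2]
    exact hb0
  obtain ⟨wv, hw0, hker⟩ := Matrix.exists_mulVec_eq_zero_iff.2 hJevdet
  -- the pencil (MC + b₀ MB) + a MA
  set P0 : Matrix (Fin m) (Fin (m+1)) ℂ := Matrix.of fun r c => MC r c + b₀ * MB r c with hP0
  have hinj : ∀ a : ℂ, ∀ x, x ≠ 0 → vecMul x (pev P0 MA a) ≠ 0 := by
    intro a x hx h
    refine hAll a b₀ 1 (by norm_num) x hx ?_
    have he : (Matrix.of fun r co => a * MA r co + b₀ * MB r co + 1 * MC r co)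
        = pev P0 MA a :=
      Matrix.ext fun r co => by rw [Matrix.of_apply]; simp [pev, hP0]; ring
    rwa [he]
  -- the evaluated cofactors
  have gdef : ∀ i : Fin (m+1), Polynomial.map (Polynomial.evalRingHom b₀) (ghat MA MB MC i)
      = det (aug (pmat P0 MA) (Pi.single i 1)) := by
    intro i
    have h1 : (aug (E2 MA MB MC) (Pi.single i 1)).map
        (Polynomial.mapRingHom (Polynomial.evalRingHom b₀))
        = aug (pmat P0 MA) (Pi.single i 1) := by
      rw [aug_map]
      have e1 : (Matrix.of fun r c => (Polynomial.mapRingHom (Polynomial.evalRingHom b₀))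
          (E2 MA MB MC r c)) = pmat P0 MA :=
        Matrix.ext fun r c => by
          simp only [Matrix.of_apply, E2, pmat, hP0, Polynomial.coe_mapRingHom,
            Polynomial.map_add, Polynomial.map_mul, Polynomial.map_C, Polynomial.map_X]
          simp only [Polynomial.eval_add, Polynomial.eval_mul, Polynomial.eval_C,
            Polynomial.eval_X, Polynomial.coe_evalRingHom]
          ring_nf
      have e2 : (fun c => (Polynomial.mapRingHom (Polynomial.evalRingHom b₀))
          ((Pi.single i 1 : Fin (m+1) → Polynomial (Polynomial ℂ)) c))
          = (Pi.single i 1 : Fin (m+1) → Polynomial ℂ) := by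
        funext c
        by_cases hc : c = i
        · subst hc; simp
        · simp [Pi.single_eq_of_ne hc]
      rw [e1, e2]
    have h2 := det_map' (Polynomial.mapRingHom (Polynomial.evalRingHom b₀))
      (aug (E2 MA MB MC) (Pi.single i 1))
    rw [h1] at h2
    rw [h2, ghat]
    rw [show (Polynomial.mapRingHom (Polynomial.evalRingHom b₀))
        (det (aug (E2 MA MB MC) (Pi.single i 1)))
      = Polynomial.map (Polynomial.evalRingHom b₀) (det (aug (E2 MA MB MC) (Pi.single i 1)))
      from rfl]
  -- the polynomial det (aug (pmat P0 MA) wv) vanishes identically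
  have hq0 : det (aug (pmat P0 MA) (fun c => Polynomial.C (wv c))) = 0 := by
    rw [det_aug_eq_sum]
    apply Polynomial.ext
    intro n
    rw [Polynomial.finset_sum_coeff, Polynomial.coeff_zero]
    have hterm : ∀ i : Fin (m+1), (Polynomial.C (wv i)
        * det (aug (pmat P0 MA) (Pi.single i 1))).coeff n
        = wv i * ((ghat MA MB MC i).coeff n).eval b₀ := by
      intro i
      rw [Polynomial.coeff_C_mul, ← gdef i, Polynomial.coeff_map]
      rfl
    rw [Finset.sum_congr rfl fun i _ => hterm i]
    by_cases hn : n ≤ m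
    · have h := congrFun hker ⟨n, by omega⟩
      simp only [hJev, Matrix.mulVec, dotProduct, Matrix.of_apply, Pi.zero_apply] at h
      rw [← h]
      exact Finset.sum_congr rfl fun i _ => by ring
    · refine Finset.sum_eq_zero fun i _ => ?_
      have hz : (ghat MA MB MC i).coeff n = 0 := by
        apply Polynomial.ext
        intro j
        rw [TD_ghat MA MB MC i n j (by omega), Polynomial.coeff_zero]
      rw [hz, Polynomial.eval_zero, mul_zero]
  have hww : ∀ a : ℂ, ∃ x, vecMul x (pev P0 MA a) = wv := by
    intro a
    apply exists_vecMul_of_det_aug _ _ (hinj a)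
    rw [← det_aug_pmat_eval P0 MA wv a, hq0, Polynomial.eval_zero]
  exact hw0 (stepA P0 MA hinj hQA wv hww)

end Core

end NoIso

/-- Let `X` be a surface with `χ(O_X) = 1` and `q(X) = h¹(O_X) = 3` and let
`P ∈ Pic⁰(X)` with `h⁰(−P) = 0` and `h¹(−P) > 0`.  We model the cohomology
groups `H¹(−P)`, `H¹(O_X)`, `H²(−P)` as finite-dimensional complex vector
spaces; `χ(−P) = χ(O_X)` gives `h⁰(−P) − h¹(−P) + h²(−P) = 1`.  If the cup
product `H¹(−P) ⊗ H¹(O_X) → H²(−P)` is nonzero on all nonzero simple tensors,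
we get a contradiction. -/
theorem no_isolated_nontrivial_point
    (H1P H1O H2P : Type*)
    [AddCommGroup H1P] [Module ℂ H1P] [FiniteDimensional ℂ H1P]
    [AddCommGroup H1O] [Module ℂ H1O] [FiniteDimensional ℂ H1O]
    [AddCommGroup H2P] [Module ℂ H2P] [FiniteDimensional ℂ H2P]
    (h0P : ℕ) (hh0 : h0P = 0)
    (hq : Module.finrank ℂ H1O = 3)
    (hh1pos : 0 < Module.finrank ℂ H1P)
    (hchi : (h0P : ℤ) - Module.finrank ℂ H1P + Module.finrank ℂ H2P = 1)
    (cup : H1P →ₗ[ℂ] H1O →ₗ[ℂ] H2P)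
    (hcup : ∀ v : H1P, ∀ w : H1O, v ≠ 0 → w ≠ 0 → cup v w ≠ 0) :
    False := by
  classical
  subst hh0
  set m : ℕ := Module.finrank ℂ H1P with hm
  have hm1 : 1 ≤ m := hh1pos
  have hh2 : Module.finrank ℂ H2P = m + 1 := by
    push_cast at hchi
    omega
  let bP : Module.Basis (Fin m) ℂ H1P := Module.finBasis ℂ H1P
  let bO : Module.Basis (Fin 3) ℂ H1O := (Module.finBasis ℂ H1O).reindex (finCongr hq)
  let b2 : Module.Basis (Fin (m+1)) ℂ H2P := (Module.finBasis ℂ H2P).reindex (finCongr hh2)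
  let Mof : H1O → Matrix (Fin m) (Fin (m+1)) ℂ :=
    fun w => ((LinearMap.toMatrix bP b2) (cup.flip w))ᵀ
  refine NoIso.core (Mof (bO 0)) (Mof (bO 1)) (Mof (bO 2)) hm1 ?_
  intro a b c habc x hx
  set w : H1O := a • bO 0 + b • bO 1 + c • bO 2 with hw
  have hwne : w ≠ 0 := by
    intro h
    apply habc
    have h0 : (bO.repr w) 0 = a := by rw [hw]; simp [Finsupp.single_apply]
    have h1 : (bO.repr w) 1 = b := by rw [hw]; simp [Finsupp.single_apply]
    have h2 : (bO.repr w) 2 = c := by rw [hw]; simp [Finsupp.single_apply]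
    rw [h] at h0 h1 h2
    simp only [map_zero, Finsupp.coe_zero, Pi.zero_apply] at h0 h1 h2
    exact ⟨h0.symm, h1.symm, h2.symm⟩
  have hcombo : (Matrix.of fun r co => a * Mof (bO 0) r co + b * Mof (bO 1) r co
      + c * Mof (bO 2) r co) = Mof w := by
    refine Matrix.ext fun r co => ?_
    rw [Matrix.of_apply]
    have hflip : cup.flip w = a • cup.flip (bO 0) + b • cup.flip (bO 1) + c • cup.flip (bO 2) := by
      rw [hw]
      simp only [_root_.map_add, _root_.map_smul]
    show a * Mof (bO 0) r co + b * Mof (bO 1) r co + c * Mof (bO 2) r co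
        = ((LinearMap.toMatrix bP b2) (cup.flip w))ᵀ r co
    rw [hflip]
    simp only [_root_.map_add, _root_.map_smul, Matrix.transpose_apply, Matrix.add_apply,
      Matrix.smul_apply, smul_eq_mul, Mof]
  rw [hcombo]
  intro hzero
  set v : H1P := bP.equivFun.symm x with hv
  have hrepr : ⇑(bP.repr v) = x := by
    have h1 : bP.equivFun v = x := bP.equivFun.apply_symm_apply x
    rw [← h1]
    rfl
  have hv0 : v ≠ 0 := by
    intro h
    apply hx
    rw [← hrepr, h, map_zero]
    rfl
  have hkey : vecMul x (Mof w) = ⇑(b2.repr (cup v w)) := by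
    rw [Matrix.vecMul_transpose, ← hrepr,
      LinearMap.toMatrix_mulVec_repr bP b2 (cup.flip w) v]
    rfl
  rw [hkey] at hzero
  have : cup v w = 0 := by
    have h2 : b2.repr (cup v w) = 0 :=
      Finsupp.ext fun j => by simpa using congrFun hzero j
    exact (LinearEquiv.map_eq_zero_iff _).1 h2
  exact hcup v w hv0 hwne this
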